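/- Let x^{(1)} ≤ ⋯ ≤ x^{(k)} be basis elements of C(□^n) in the componentwise partial order. Then CS(∗^{k−1}(x^{(1)} ⊗ ⋯ ⊗ x^{(k)})) = ∗^{k−1}(CS(x^{(1)}) ⊗ ⋯ ⊗ CS(x^{(k)})), where ∗^{k−1} denotes the (left-parenthesized) iterated cubical join on the left and the iterated simplicial join on the right. -/

import Mathlib

/-- The three cells of the interval: `[0]`, `[0,1]` (written `mid`), and `[1]`. -/
inductive CubeF : Type
  | zero : CubeF
  | mid : CubeF
  | one : CubeF
  deriving DecidableEq

namespace CartanSerre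

/-- Basis elements of the cubical chain complex `C(□^n)`: tensors `x_1 ⊗ ⋯ ⊗ x_n`. -/
abbrev CubeB (n : ℕ) := Fin n → CubeF
/-- The cubical chain complex `C(□^n)` (as the free ℤ-module on its basis). -/
abbrev CubeChain (n : ℕ) := CubeB n →₀ ℤ
/-- `C(□^n) ⊗ C(□^n)`, modeled as the free ℤ-module on pairs of basis elements. -/
abbrev CubeChain2 (n : ℕ) := (CubeB n × CubeB n) →₀ ℤ
/-- Basis elements of `C(Δ^n)`: strictly increasing tuples `[v_0, …, v_m]` with
`v_i ∈ {0,…,n}`, i.e. nonempty finite subsets of `Fin (n+1)` (`∅` is not used). -/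
abbrev SimpB (n : ℕ) := Finset (Fin (n + 1))
/-- The normalized simplicial chain complex `C(Δ^n)`. -/
abbrev SimpChain (n : ℕ) := SimpB n →₀ ℤ
/-- `C(Δ^n) ⊗ C(Δ^n)`. -/
abbrev SimpChain2 (n : ℕ) := (SimpB n × SimpB n) →₀ ℤ

/-- Degree of a cubical basis element: the number of factors equal to `[0,1]`. -/
def cubeDeg {n : ℕ} (x : CubeB n) : ℕ :=
  (Finset.univ.filter fun i => x i = CubeF.mid).card

/-- Degree of a simplicial basis element `[v_0, …, v_m]`, namely `m`. -/
def simpDeg {n : ℕ} (s : SimpB n) : ℕ := s.card - 1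

/-- The cubical boundary on a basis element. -/
noncomputable def cubeBdFun (n : ℕ) (x : CubeB n) : CubeChain n :=
  ∑ i ∈ Finset.univ.filter (fun i => x i = CubeF.mid),
    ((-1 : ℤ) ^ (Finset.univ.filter fun j => j < i ∧ x j = CubeF.mid).card) •
      (Finsupp.single (Function.update x i CubeF.one) 1 -
        Finsupp.single (Function.update x i CubeF.zero) 1)

/-- The cubical boundary `∂ : C(□^n) → C(□^n)`. -/
noncomputable def cubeBd (n : ℕ) : CubeChain n →ₗ[ℤ] CubeChain n :=
  Finsupp.lift (CubeChain n) ℤ (CubeB n) (cubeBdFun n)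

/-- The (normalized) simplicial boundary on a basis element. -/
noncomputable def simpBdFun (n : ℕ) (s : SimpB n) : SimpChain n :=
  if 2 ≤ s.card then
    ∑ v ∈ s, ((-1 : ℤ) ^ (s.filter fun w => w < v).card) • Finsupp.single (s.erase v) 1
  else 0

/-- The simplicial boundary `∂ : C(Δ^n) → C(Δ^n)`. -/
noncomputable def simpBd (n : ℕ) : SimpChain n →ₗ[ℤ] SimpChain n :=
  Finsupp.lift (SimpChain n) ℤ (SimpB n) (simpBdFun n)

/-- `p(x) - 1` (0-indexed): the first position of a factor `[0]`, or `n` if there is none. -/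
def pIdx {n : ℕ} (x : CubeB n) : Fin (n + 1) :=
  ⟨(List.ofFn x).findIdx (fun c => decide (c = CubeF.zero)), by
    have h : (List.ofFn x).findIdx (fun c => decide (c = CubeF.zero)) ≤ (List.ofFn x).length :=
      List.findIdx_le_length
    simp only [List.length_ofFn] at h
    omega⟩

/-- The vertex set `[q_1 - 1, …, q_m - 1, p(x) - 1]` of the image of `x` under `CS`. -/
def csSet {n : ℕ} (x : CubeB n) : SimpB n :=
  insert (pIdx x) ((Finset.univ.filter fun i => x i = CubeF.mid).image Fin.castSucc)

/-- The Cartan–Serre map `CS` on a cubical basis element. -/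
noncomputable def csFun (n : ℕ) (x : CubeB n) : SimpChain n :=
  if ∃ i j : Fin n, i < j ∧ x i = CubeF.zero ∧ x j = CubeF.mid then 0
  else Finsupp.single (csSet x) 1

/-- The Cartan–Serre chain map `CS : C(□^n) → C(Δ^n)`. -/
noncomputable def csL (n : ℕ) : CubeChain n →ₗ[ℤ] SimpChain n :=
  Finsupp.lift (SimpChain n) ℤ (CubeB n) (csFun n)

/-- The cubical counit `ε_□ : C(□^n) → ℤ`. -/
noncomputable def cubeEps (n : ℕ) : CubeChain n →ₗ[ℤ] ℤ :=
  Finsupp.lift ℤ ℤ (CubeB n) (fun x => if cubeDeg x = 0 then (1 : ℤ) else 0)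

/-- The simplicial counit `ε_Δ : C(Δ^n) → ℤ`. -/
noncomputable def simpEps (n : ℕ) : SimpChain n →ₗ[ℤ] ℤ :=
  Finsupp.lift ℤ ℤ (SimpB n) (fun s => if s.card = 1 then (1 : ℤ) else 0)

/-- Tensor product of two elements of free modules, in the product-basis model. -/
noncomputable def tensorF {α β : Type*} (a : α →₀ ℤ) (b : β →₀ ℤ) : (α × β) →₀ ℤ :=
  a.sum fun i r => b.sum fun j s => Finsupp.single (i, j) (r * s)

/-- Left factor of the Serre diagonal summand indexed by `S`:
factors in `S` contribute `[0,1]`, the other `[0,1]`-factors contribute `[0]`. -/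
def serreL {n : ℕ} (x : CubeB n) (S : Finset (Fin n)) : CubeB n := fun i =>
  if x i = CubeF.mid then (if i ∈ S then CubeF.mid else CubeF.zero) else x i

/-- Right factor of the Serre diagonal summand indexed by `S`. -/
def serreR {n : ℕ} (x : CubeB n) (S : Finset (Fin n)) : CubeB n := fun i =>
  if x i = CubeF.mid then (if i ∈ S then CubeF.one else CubeF.mid) else x i

/-- Koszul sign exponent of the Serre diagonal summand indexed by `S`. -/
def serreSign {n : ℕ} (x : CubeB n) (S : Finset (Fin n)) : ℕ :=
  ((Finset.univ : Finset (Fin n × Fin n)).filter fun p =>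
    p.1 < p.2 ∧ x p.1 = CubeF.mid ∧ p.1 ∉ S ∧ p.2 ∈ S).card

/-- The Serre diagonal `Δ_□` on a basis element: the tensor product (with Koszul
signs) of `Δ[0] = [0]⊗[0]`, `Δ[1] = [1]⊗[1]`, `Δ[0,1] = [0]⊗[0,1] + [0,1]⊗[1]`. -/
noncomputable def serreDiagFun (n : ℕ) (x : CubeB n) : CubeChain2 n :=
  ∑ S ∈ (Finset.univ.filter fun i => x i = CubeF.mid).powerset,
    ((-1 : ℤ) ^ serreSign x S) • Finsupp.single (serreL x S, serreR x S) 1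

/-- The Serre diagonal `Δ_□ : C(□^n) → C(□^n) ⊗ C(□^n)`. -/
noncomputable def serreDiag (n : ℕ) : CubeChain n →ₗ[ℤ] CubeChain2 n :=
  Finsupp.lift (CubeChain2 n) ℤ (CubeB n) (serreDiagFun n)

/-- The Alexander–Whitney coproduct on a basis element:
`Δ_AW [v_0,…,v_m] = Σ_i [v_0,…,v_i] ⊗ [v_i,…,v_m]`. -/
noncomputable def awFun (n : ℕ) (s : SimpB n) : SimpChain2 n :=
  ∑ v ∈ s, Finsupp.single (s.filter fun w => w ≤ v, s.filter fun w => v ≤ w) 1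

/-- The Alexander–Whitney coproduct `Δ_AW : C(Δ^n) → C(Δ^n) ⊗ C(Δ^n)`. -/
noncomputable def awDiag (n : ℕ) : SimpChain n →ₗ[ℤ] SimpChain2 n :=
  Finsupp.lift (SimpChain2 n) ℤ (SimpB n) (awFun n)

/-- `CS ⊗ CS : C(□^n) ⊗ C(□^n) → C(Δ^n) ⊗ C(Δ^n)` (no Koszul signs: `CS` has degree 0). -/
noncomputable def cs2L (n : ℕ) : CubeChain2 n →ₗ[ℤ] SimpChain2 n :=
  Finsupp.lift (SimpChain2 n) ℤ (CubeB n × CubeB n)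
    (fun p => tensorF (csFun n p.1) (csFun n p.2))

/-- The join on single cube factors: `[0] ∗ [1] = [0,1]`, `[1] ∗ [0] = -[0,1]`,
all other joins of basis elements vanish (the outcome factor being `[0,1]`). -/
def joinF : CubeF → CubeF → ℤ
  | CubeF.zero, CubeF.one => 1
  | CubeF.one, CubeF.zero => -1
  | _, _ => 0

/-- The cubical join `∗` on basis elements. -/
noncomputable def cubeJoinFun (n : ℕ) (x y : CubeB n) : CubeChain n :=
  ((-1 : ℤ) ^ cubeDeg x) •
    ∑ l : Fin n,
      ((if (∀ j, j < l → y j ≠ CubeF.mid) ∧ (∀ j, l < j → x j ≠ CubeF.mid) then (1 : ℤ) else 0) *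
          joinF (x l) (y l)) •
        Finsupp.single (fun j => if j < l then x j else if j = l then CubeF.mid else y j) 1

/-- The cubical join, extended bilinearly to chains. -/
noncomputable def cubeJoinC (n : ℕ) (a b : CubeChain n) : CubeChain n :=
  a.sum fun x r => b.sum fun y s => (r * s) • cubeJoinFun n x y

/-- The simplicial join `∗` on basis elements: `0` if the vertex sets meet, and
otherwise `(-1)^{p + |σ|}` times the union, `|σ|` counting the inversions. -/
noncomputable def simpJoinFun (n : ℕ) (s t : SimpB n) : SimpChain n :=
  if s ∩ t = ∅ ∧ s.Nonempty ∧ t.Nonempty then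
    ((-1 : ℤ) ^ ((s.card - 1) + ((s ×ˢ t).filter fun p => p.2 < p.1).card)) •
      Finsupp.single (s ∪ t) 1
  else 0

/-- The simplicial join, extended bilinearly to chains. -/
noncomputable def simpJoinC (n : ℕ) (a b : SimpChain n) : SimpChain n :=
  a.sum fun s r => b.sum fun t u => (r * u) • simpJoinFun n s t

/-- The linear order `[0] < [0,1] < [1]` on interval cells, via `0 < 1 < 2`. -/
def cellVal : CubeF → ℕ
  | CubeF.zero => 0
  | CubeF.mid => 1
  | CubeF.one => 2

/-- The componentwise partial order on cubical basis elements,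
with `[0] < [0,1] < [1]` on each factor. -/
def cubeLe {n : ℕ} (x y : CubeB n) : Prop := ∀ i, cellVal (x i) ≤ cellVal (y i)

/-- Left-parenthesized iterated join of a nonempty list (the base case `[]` is junk). -/
noncomputable def foldJoin {C : Type*} (join : C → C → C) (z : C) : List C → C
  | [] => z
  | a :: l => l.foldl join a

/-- Left-parenthesized iterated cubical join `∗^{k}` of `k+1` basis elements. -/
noncomputable def iterCubeJoin (n k : ℕ) (f : Fin (k + 1) → CubeB n) : CubeChain n :=
  foldJoin (cubeJoinC n) 0 (List.ofFn fun i : Fin (k + 1) => (Finsupp.single (f i) 1 : CubeChain n))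

/-- Left-parenthesized iterated simplicial join `∗^{k}` of `k+1` chains. -/
noncomputable def iterSimpJoin (n k : ℕ) (g : Fin (k + 1) → SimpChain n) : SimpChain n :=
  foldJoin (simpJoinC n) 0 (List.ofFn g)

/-- The iterated Serre diagonal `Δ_□^k` on a basis element, with `k+1` output factors
(iterated on the last factor; this is unambiguous by coassociativity, and no Koszul
signs appear since `Δ_□` has degree `0`). -/
noncomputable def serreIterFun (n : ℕ) : (k : ℕ) → CubeB n → ((Fin (k + 1) → CubeB n) →₀ ℤ)
  | 0, x => Finsupp.single (fun _ => x) 1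
  | k + 1, x =>
    (serreIterFun n k x).sum fun f c =>
      (serreDiagFun n (f (Fin.last k))).sum fun p d =>
        Finsupp.single
          (fun i : Fin (k + 2) =>
            if h : (i : ℕ) < k then f ⟨(i : ℕ), by omega⟩
            else if (i : ℕ) = k then p.1 else p.2) (c * d)

/-- The iterated Serre diagonal `Δ_□^k : C(□^n) → C(□^n)^{⊗(k+1)}`. -/
noncomputable def serreIter (n k : ℕ) : CubeChain n →ₗ[ℤ] ((Fin (k + 1) → CubeB n) →₀ ℤ) :=
  Finsupp.lift _ ℤ (CubeB n) (serreIterFun n k)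

/-- The iterated Alexander–Whitney coproduct `Δ_AW^k` on a basis element. -/
noncomputable def awIterFun (n : ℕ) : (k : ℕ) → SimpB n → ((Fin (k + 1) → SimpB n) →₀ ℤ)
  | 0, s => Finsupp.single (fun _ => s) 1
  | k + 1, s =>
    (awIterFun n k s).sum fun f c =>
      (awFun n (f (Fin.last k))).sum fun p d =>
        Finsupp.single
          (fun i : Fin (k + 2) =>
            if h : (i : ℕ) < k then f ⟨(i : ℕ), by omega⟩
            else if (i : ℕ) = k then p.1 else p.2) (c * d)

/-- The iterated Alexander–Whitney coproduct `Δ_AW^k : C(Δ^n) → C(Δ^n)^{⊗(k+1)}`. -/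
noncomputable def awIter (n k : ℕ) : SimpChain n →ₗ[ℤ] ((Fin (k + 1) → SimpB n) →₀ ℤ) :=
  Finsupp.lift _ ℤ (SimpB n) (awIterFun n k)

/-- The action of a permutation `τ` on a `k`-fold tensor of basis elements,
with the Koszul sign determined by the degrees of the factors it transposes. -/
noncomputable def koszulPermFun {α : Type*} (deg : α → ℕ) {k : ℕ} (τ : Equiv.Perm (Fin k))
    (f : Fin k → α) : (Fin k → α) →₀ ℤ :=
  ((-1 : ℤ) ^ ∑ p ∈ (Finset.univ : Finset (Fin k × Fin k)).filter
      (fun p => p.1 < p.2 ∧ τ p.2 < τ p.1), deg (f (τ p.1)) * deg (f (τ p.2))) •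
    Finsupp.single (fun i => f (τ i)) 1

/-- The action of a permutation on `k`-fold tensors, with Koszul signs. -/
noncomputable def koszulPerm {α : Type*} (deg : α → ℕ) {k : ℕ} (τ : Equiv.Perm (Fin k)) :
    ((Fin k → α) →₀ ℤ) →ₗ[ℤ] ((Fin k → α) →₀ ℤ) :=
  Finsupp.lift _ ℤ (Fin k → α) (koszulPermFun deg τ)

/-- Tensor product of an `r`-tuple of elements of a free module, product-basis model. -/
noncomputable def tensorPi {r : ℕ} {α : Type*} [DecidableEq α] (c : Fin r → (α →₀ ℤ)) :
    (Fin r → α) →₀ ℤ :=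
  ∑ g ∈ Fintype.piFinset (fun i => (c i).support), Finsupp.single g (∏ i, (c i) (g i))

/-- `CS^{⊗ r} : C(□^n)^{⊗ r} → C(Δ^n)^{⊗ r}` (no Koszul signs: `CS` has degree 0). -/
noncomputable def csTensor (n r : ℕ) : ((Fin r → CubeB n) →₀ ℤ) →ₗ[ℤ] ((Fin r → SimpB n) →₀ ℤ) :=
  Finsupp.lift _ ℤ (Fin r → CubeB n) (fun f => tensorPi fun i => csFun n (f i))

/-- The index in `Fin (k_1 + ⋯ + k_r)` of the `j`-th tensor factor of the `i`-th block. -/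
def blockIdx {r : ℕ} (K : Fin r → ℕ) {m : ℕ} (hm : m + 1 = ∑ i, K i) (i : Fin r)
    (j : Fin (K i)) : Fin (m + 1) :=
  ⟨(∑ j' ∈ Finset.univ.filter (fun j' => j' < i), K j') + (j : ℕ), by
    have h2 : (j : ℕ) < K i := j.isLt
    have h3 : K i + ∑ j' ∈ Finset.univ.filter (fun j' => j' < i), K j' ≤ ∑ i', K i' := by
      rw [← Finset.sum_insert (a := i) (s := Finset.univ.filter (fun j' => j' < i)) (by simp)]
      exact Finset.sum_le_sum_of_subset (Finset.subset_univ _)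
    omega⟩

/-- A `(k_1, …, k_r)`-shuffle: a permutation increasing on each block. -/
def IsShuffle {r : ℕ} (K : Fin r → ℕ) {m : ℕ} (hm : m + 1 = ∑ i, K i)
    (σ : Equiv.Perm (Fin (m + 1))) : Prop :=
  ∀ (i : Fin r) (j j' : Fin (K i)), j < j' → σ (blockIdx K hm i j) < σ (blockIdx K hm i j')

/-- Total degree of the `i`-th block of a `k`-fold cubical tensor. -/
def cubeBlockDeg {n r : ℕ} (K : Fin r → ℕ) {m : ℕ} (hm : m + 1 = ∑ i, K i)
    (f : Fin (m + 1) → CubeB n) (i : Fin r) : ℕ :=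
  ∑ j : Fin (K i), cubeDeg (f (blockIdx K hm i j))

/-- Total degree of the `i`-th block of a `k`-fold simplicial tensor. -/
def simpBlockDeg {n r : ℕ} (K : Fin r → ℕ) {m : ℕ} (hm : m + 1 = ∑ i, K i)
    (f : Fin (m + 1) → SimpB n) (i : Fin r) : ℕ :=
  ∑ j : Fin (K i), simpDeg (f (blockIdx K hm i j))

/-- `∗^{k_1 - 1} ⊗ ⋯ ⊗ ∗^{k_r - 1}` on a cubical `k`-fold tensor basis element, with
the Koszul sign for applying the degree-`(k_i - 1)` maps across the earlier blocks. -/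
noncomputable def cubeBlockJoinFun (n r : ℕ) (K : Fin r → ℕ) {m : ℕ} (hm : m + 1 = ∑ i, K i)
    (f : Fin (m + 1) → CubeB n) : (Fin r → CubeB n) →₀ ℤ :=
  ((-1 : ℤ) ^ ∑ p ∈ (Finset.univ : Finset (Fin r × Fin r)).filter (fun p => p.1 < p.2),
      (K p.2 - 1) * cubeBlockDeg K hm f p.1) •
    tensorPi (fun i : Fin r =>
      foldJoin (cubeJoinC n) 0
        (List.ofFn fun j : Fin (K i) => (Finsupp.single (f (blockIdx K hm i j)) 1 : CubeChain n)))

/-- `∗^{k_1 - 1} ⊗ ⋯ ⊗ ∗^{k_r - 1} : C(□^n)^{⊗ k} → C(□^n)^{⊗ r}`. -/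
noncomputable def cubeBlockJoin (n r : ℕ) (K : Fin r → ℕ) {m : ℕ} (hm : m + 1 = ∑ i, K i) :
    ((Fin (m + 1) → CubeB n) →₀ ℤ) →ₗ[ℤ] ((Fin r → CubeB n) →₀ ℤ) :=
  Finsupp.lift _ ℤ (Fin (m + 1) → CubeB n) (cubeBlockJoinFun n r K hm)

/-- `∗^{k_1 - 1} ⊗ ⋯ ⊗ ∗^{k_r - 1}` on a simplicial `k`-fold tensor basis element. -/
noncomputable def simpBlockJoinFun (n r : ℕ) (K : Fin r → ℕ) {m : ℕ} (hm : m + 1 = ∑ i, K i)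
    (f : Fin (m + 1) → SimpB n) : (Fin r → SimpB n) →₀ ℤ :=
  ((-1 : ℤ) ^ ∑ p ∈ (Finset.univ : Finset (Fin r × Fin r)).filter (fun p => p.1 < p.2),
      (K p.2 - 1) * simpBlockDeg K hm f p.1) •
    tensorPi (fun i : Fin r =>
      foldJoin (simpJoinC n) 0
        (List.ofFn fun j : Fin (K i) => (Finsupp.single (f (blockIdx K hm i j)) 1 : SimpChain n)))

/-- `∗^{k_1 - 1} ⊗ ⋯ ⊗ ∗^{k_r - 1} : C(Δ^n)^{⊗ k} → C(Δ^n)^{⊗ r}`. -/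
noncomputable def simpBlockJoin (n r : ℕ) (K : Fin r → ℕ) {m : ℕ} (hm : m + 1 = ∑ i, K i) :
    ((Fin (m + 1) → SimpB n) →₀ ℤ) →ₗ[ℤ] ((Fin r → SimpB n) →₀ ℤ) :=
  Finsupp.lift _ ℤ (Fin (m + 1) → SimpB n) (simpBlockJoinFun n r K hm)

/-- A chain is homogeneous of degree `m` if its support is contained in degree-`m` basis elements. -/
def cubeHomog (n m : ℕ) (c : CubeChain n) : Prop := ∀ x ∈ c.support, cubeDeg x = m

/-- A simplicial chain is homogeneous of degree `m` if every basis element in its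
support is a strictly increasing tuple `[v_0, …, v_m]`, i.e. has `m+1` vertices. -/
def simpHomog (n m : ℕ) (c : SimpChain n) : Prop := ∀ s ∈ c.support, s.card = m + 1

open Finsupp

variable {n : ℕ}

/-- Vanishing condition of `csFun`. -/
abbrev Bad {n : ℕ} (x : CubeB n) : Prop :=
  ∃ i j : Fin n, i < j ∧ x i = CubeF.zero ∧ x j = CubeF.mid

lemma csFun_def (x : CubeB n) :
    csFun n x = if Bad x then 0 else Finsupp.single (csSet x) 1 := rfl

lemma cubeLe_zero {x y : CubeB n} (h : cubeLe x y) {i : Fin n} (hy : y i = CubeF.zero) :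
    x i = CubeF.zero := by
  have hh := h i
  rw [hy] at hh
  cases hx : x i
  · rfl
  all_goals (rw [hx] at hh; simp [cellVal] at hh)

lemma cubeLe_one {x y : CubeB n} (h : cubeLe x y) {i : Fin n} (hx : x i = CubeF.one) :
    y i = CubeF.one := by
  have hh := h i
  rw [hx] at hh
  cases hy : y i
  · rw [hy] at hh; simp [cellVal] at hh
  · rw [hy] at hh; simp [cellVal] at hh
  · rfl

lemma joinF_cases {a b : CubeF} (h : joinF a b ≠ 0) :
    (a = CubeF.zero ∧ b = CubeF.one) ∨ (a = CubeF.one ∧ b = CubeF.zero) := by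
  cases a <;> cases b <;> simp [joinF] at h ⊢

lemma joinF_ne {x y : CubeB n} (hxy : cubeLe x y) {l : Fin n} (h : joinF (x l) (y l) ≠ 0) :
    x l = CubeF.zero ∧ y l = CubeF.one := by
  rcases joinF_cases h with h' | ⟨h1, h2⟩
  · exact h'
  · exfalso
    have hh := hxy l
    rw [h1, h2] at hh
    simp [cellVal] at hh

lemma pIdx_ne (x : CubeB n) (j : Fin n) (h : (j : ℕ) < (pIdx x : ℕ)) : x j ≠ CubeF.zero := by
  have h2 : (j : ℕ) < (List.ofFn x).length := by simp
  have := List.not_of_lt_findIdx (p := fun c => decide (c = CubeF.zero)) (xs := List.ofFn x)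
    (i := (j : ℕ)) h
  simp only [List.getElem_ofFn, Fin.eta, decide_eq_false_iff_not] at this
  exact this

lemma pIdx_le (x : CubeB n) (j : Fin n) (h : x j = CubeF.zero) : (pIdx x : ℕ) ≤ (j : ℕ) := by
  by_contra h'
  exact pIdx_ne x j (by omega) h

lemma pIdx_zero (x : CubeB n) (h : (pIdx x : ℕ) < n) : x ⟨pIdx x, h⟩ = CubeF.zero := by
  have h2 : (pIdx x : ℕ) < (List.ofFn x).length := by simpa using h
  have := List.findIdx_getElem (p := fun c => decide (c = CubeF.zero)) (xs := List.ofFn x)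
    (w := h2)
  simp only [decide_eq_true_eq] at this
  exact (List.getElem_ofFn ..).symm.trans this

lemma pIdx_eq (x : CubeB n) (i : Fin (n + 1))
    (h1 : ∀ j : Fin n, (j : ℕ) < (i : ℕ) → x j ≠ CubeF.zero)
    (h2 : ∀ h : (i : ℕ) < n, x ⟨i, h⟩ = CubeF.zero) : pIdx x = i := by
  have hpn : (pIdx x : ℕ) ≤ n := by have := (pIdx x).isLt; omega
  have hin : (i : ℕ) ≤ n := by have := i.isLt; omega
  rcases lt_trichotomy ((pIdx x : ℕ)) ((i : ℕ)) with hlt | heq | hgt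
  · have hn : (pIdx x : ℕ) < n := by omega
    exact absurd (pIdx_zero x hn) (h1 ⟨pIdx x, hn⟩ hlt)
  · exact Fin.ext heq
  · have hn : (i : ℕ) < n := by omega
    have hle : (pIdx x : ℕ) ≤ (i : ℕ) := pIdx_le x ⟨i, hn⟩ (h2 hn)
    omega

/-- The basis element produced by the `l`-th summand of the cubical join. -/
def zJ (x y : CubeB n) (l : Fin n) : CubeB n :=
  fun j => if j < l then x j else if j = l then CubeF.mid else y j

lemma cubeJoinFun_eq (x y : CubeB n) :
    cubeJoinFun n x y = ((-1 : ℤ) ^ cubeDeg x) •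
      ∑ l : Fin n,
        ((if (∀ j, j < l → y j ≠ CubeF.mid) ∧ (∀ j, l < j → x j ≠ CubeF.mid) then (1 : ℤ) else 0) *
          joinF (x l) (y l)) • Finsupp.single (zJ x y l) 1 := rfl

lemma zJ_lt {x y : CubeB n} {l j : Fin n} (h : j < l) : zJ x y l j = x j := by
  simp [zJ, h]

lemma zJ_self {x y : CubeB n} {l : Fin n} : zJ x y l l = CubeF.mid := by
  simp [zJ]

lemma zJ_gt {x y : CubeB n} {l j : Fin n} (h : l < j) : zJ x y l j = y j := by
  have h1 : ¬ j < l := by omega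
  have h2 : j ≠ l := by omega
  simp [zJ, h1, h2]

/-- The condition for the `l`-th join summand to survive `CS`. -/
def goodL (x y : CubeB n) (l : Fin n) : Prop :=
  x l = CubeF.zero ∧ y l = CubeF.one ∧ (∀ j, j < l → x j ≠ CubeF.zero) ∧
    (∀ j : Fin n, y j = CubeF.mid → l < j)

lemma bad_zJ_of_bad_left {x y : CubeB n} {l : Fin n} (hbx : Bad x)
    (hcond : ∀ j, l < j → x j ≠ CubeF.mid) (hx0 : x l = CubeF.zero) : Bad (zJ x y l) := by
  obtain ⟨i, j, hij, hxi, hxj⟩ := hbx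
  have hjl : j < l := by
    have h1 : ¬ l < j := fun h => hcond j h hxj
    have h2 : j ≠ l := fun h => by rw [h, hx0] at hxj; exact absurd hxj (by simp)
    omega
  exact ⟨i, j, hij, by rw [zJ_lt (lt_trans hij hjl)]; exact hxi, by rw [zJ_lt hjl]; exact hxj⟩

lemma bad_zJ_of_bad_right {x y : CubeB n} {l : Fin n} (hxy : cubeLe x y) (hby : Bad y)
    (hcond : ∀ j, j < l → y j ≠ CubeF.mid) (hy1 : y l = CubeF.one) : Bad (zJ x y l) := by
  obtain ⟨i, j, hij, hyi, hyj⟩ := hby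
  have hlj : l < j := by
    have h1 : ¬ j < l := fun h => hcond j h hyj
    have h2 : j ≠ l := fun h => by rw [h, hy1] at hyj; exact absurd hyj (by simp)
    omega
  have hzj : zJ x y l j = CubeF.mid := by rw [zJ_gt hlj]; exact hyj
  rcases lt_trichotomy i l with hil | hil | hil
  · exact ⟨i, j, hij, by rw [zJ_lt hil]; exact cubeLe_zero hxy hyi, hzj⟩
  · rw [hil, hy1] at hyi; exact absurd hyi (by simp)
  · exact ⟨i, j, hij, by rw [zJ_gt hil]; exact hyi, hzj⟩

lemma term_vanish {x y : CubeB n} (hxy : cubeLe x y) (l : Fin n)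
    (h : Bad x ∨ Bad y ∨ ¬ goodL x y l) :
    ((if (∀ j, j < l → y j ≠ CubeF.mid) ∧ (∀ j, l < j → x j ≠ CubeF.mid) then (1 : ℤ) else 0) *
        joinF (x l) (y l)) • csFun n (zJ x y l) = 0 := by
  by_cases hcond : (∀ j, j < l → y j ≠ CubeF.mid) ∧ (∀ j, l < j → x j ≠ CubeF.mid)
  · rw [if_pos hcond, one_mul]
    by_cases hj : joinF (x l) (y l) = 0
    · rw [hj, zero_smul]
    · obtain ⟨hx0, hy1⟩ := joinF_ne hxy hj
      suffices hB : Bad (zJ x y l) by rw [csFun_def, if_pos hB, smul_zero]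
      rcases h with hbx | hby | hng
      · exact bad_zJ_of_bad_left hbx hcond.2 hx0
      · exact bad_zJ_of_bad_right hxy hby hcond.1 hy1
      · -- ¬ goodL, with hx0, hy1, hcond: must be a zero of x before l
        rw [goodL] at hng
        push_neg at hng
        by_cases hj0 : ∃ j, j < l ∧ x j = CubeF.zero
        · obtain ⟨i, hil, hxi⟩ := hj0
          exact ⟨i, l, hil, by rw [zJ_lt hil]; exact hxi, zJ_self⟩
        · push_neg at hj0
          exfalso
          obtain ⟨j, hymid, hjle⟩ := hng hx0 hy1 (fun j hj => hj0 j hj)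
          rcases lt_trichotomy j l with h1 | h1 | h1
          · exact hcond.1 j h1 hymid
          · rw [h1, hy1] at hymid; exact absurd hymid (by simp)
          · omega
  · rw [if_neg hcond, zero_mul, zero_smul]

/-- The set of `[0,1]`-positions of `x`. -/
def mids (x : CubeB n) : Finset (Fin n) := Finset.univ.filter fun i => x i = CubeF.mid

lemma mem_mids {x : CubeB n} {i : Fin n} : i ∈ mids x ↔ x i = CubeF.mid := by
  simp [mids]

lemma cubeDeg_def (x : CubeB n) : cubeDeg x = (mids x).card := rfl

lemma csSet_def (x : CubeB n) : csSet x = insert (pIdx x) ((mids x).image Fin.castSucc) := rfl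

lemma mem_csSet {x : CubeB n} {a : Fin (n + 1)} :
    a ∈ csSet x ↔ a = pIdx x ∨ ∃ i : Fin n, x i = CubeF.mid ∧ Fin.castSucc i = a := by
  simp [csSet_def, mem_mids, Finset.mem_insert, Finset.mem_image, mids]

lemma pIdx_mem_csSet (x : CubeB n) : pIdx x ∈ csSet x := Finset.mem_insert_self _ _

lemma mids_lt_pIdx {x : CubeB n} (hbx : ¬ Bad x) {j : Fin n} (hj : x j = CubeF.mid) :
    (j : ℕ) < (pIdx x : ℕ) := by
  by_contra h
  push_neg at h
  have hpn : (pIdx x : ℕ) < n := lt_of_le_of_lt h j.isLt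
  have hx0 := pIdx_zero x hpn
  have hne : (pIdx x : ℕ) ≠ (j : ℕ) := by
    intro he
    rw [show (⟨pIdx x, hpn⟩ : Fin n) = j from Fin.ext he] at hx0
    rw [hx0] at hj
    exact absurd hj (by simp)
  exact hbx ⟨⟨pIdx x, hpn⟩, j, by rw [Fin.lt_def]; exact (by omega : (pIdx x : ℕ) < (j : ℕ)), hx0, hj⟩

lemma card_csSet {x : CubeB n} (hbx : ¬ Bad x) : (csSet x).card = cubeDeg x + 1 := by
  rw [csSet_def, Finset.card_insert_of_notMem, Finset.card_image_of_injective _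
    (Fin.castSucc_injective n), cubeDeg_def]
  intro hmem
  obtain ⟨j, hjm, hje⟩ := Finset.mem_image.1 hmem
  have hj := mem_mids.1 hjm
  have := mids_lt_pIdx hbx hj
  have : (Fin.castSucc j : ℕ) = (pIdx x : ℕ) := by rw [hje]
  simp at this
  omega

section Good

variable {x y : CubeB n} {l0 : Fin n}

lemma pIdx_x_eq (hg : goodL x y l0) : pIdx x = Fin.castSucc l0 := by
  apply pIdx_eq
  · intro j hj
    exact hg.2.2.1 j (by rw [Fin.lt_def]; simpa using hj)
  · intro h
    have : (⟨(Fin.castSucc l0 : ℕ), h⟩ : Fin n) = l0 := Fin.ext (by simp)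
    rw [this]
    exact hg.1

lemma l0_lt_pIdx_y (hxy : cubeLe x y) (hg : goodL x y l0) : (l0 : ℕ) < (pIdx y : ℕ) := by
  by_contra h
  push_neg at h
  have hpn : (pIdx y : ℕ) < n := lt_of_le_of_lt h l0.isLt
  have hy0 := pIdx_zero y hpn
  rcases lt_or_eq_of_le h with h1 | h1
  · exact hg.2.2.1 ⟨pIdx y, hpn⟩ (by rw [Fin.lt_def]; simpa using h1) (cubeLe_zero hxy hy0)
  · rw [show (⟨pIdx y, hpn⟩ : Fin n) = l0 from Fin.ext h1, hg.2.1] at hy0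
    exact absurd hy0 (by simp)

lemma mem_csSet_x_le (hbx : ¬ Bad x) (hg : goodL x y l0) {a : Fin (n + 1)}
    (ha : a ∈ csSet x) : (a : ℕ) ≤ (l0 : ℕ) := by
  rcases mem_csSet.1 ha with h | ⟨i, hi, he⟩
  · rw [h, pIdx_x_eq hg]; simp
  · rw [← he]
    have := mids_lt_pIdx hbx hi
    rw [pIdx_x_eq hg] at this
    simpa using le_of_lt (by simpa using this)

lemma mem_csSet_y_gt (hxy : cubeLe x y) (hg : goodL x y l0) {b : Fin (n + 1)}
    (hb : b ∈ csSet y) : (l0 : ℕ) < (b : ℕ) := by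
  rcases mem_csSet.1 hb with h | ⟨i, hi, he⟩
  · rw [h]; exact l0_lt_pIdx_y hxy hg
  · rw [← he]
    have := hg.2.2.2 i hi
    rw [Fin.lt_def] at this
    simpa using this

lemma csSet_disj (hxy : cubeLe x y) (hbx : ¬ Bad x) (hg : goodL x y l0) :
    csSet x ∩ csSet y = ∅ := by
  rw [Finset.eq_empty_iff_forall_notMem]
  intro a ha
  rw [Finset.mem_inter] at ha
  have h1 := mem_csSet_x_le hbx hg ha.1
  have h2 := mem_csSet_y_gt hxy hg ha.2
  omega

lemma inversions_zero (hxy : cubeLe x y) (hbx : ¬ Bad x) (hg : goodL x y l0) :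
    (((csSet x) ×ˢ (csSet y)).filter fun p => p.2 < p.1).card = 0 := by
  rw [Finset.card_eq_zero, Finset.eq_empty_iff_forall_notMem]
  intro p hp
  rw [Finset.mem_filter, Finset.mem_product] at hp
  have h1 := mem_csSet_x_le hbx hg hp.1.1
  have h2 := mem_csSet_y_gt hxy hg hp.1.2
  have h3 := hp.2
  rw [Fin.lt_def] at h3
  omega

lemma mids_zJ (hxy : cubeLe x y) (hbx : ¬ Bad x) (hg : goodL x y l0) :
    mids (zJ x y l0) = insert l0 (mids x ∪ mids y) := by
  ext i
  simp only [mem_mids, Finset.mem_insert, Finset.mem_union]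
  rcases lt_trichotomy i l0 with h | h | h
  · rw [zJ_lt h]
    constructor
    · intro hx; exact Or.inr (Or.inl hx)
    · rintro (he | hx | hy)
      · exact absurd he (by omega)
      · exact hx
      · exact absurd (hg.2.2.2 i hy) (by omega)
  · rw [h, zJ_self]
    simp
  · rw [zJ_gt h]
    constructor
    · intro hy; exact Or.inr (Or.inr hy)
    · rintro (he | hx | hy)
      · exact absurd he (by omega)
      · exact absurd (⟨l0, i, h, hg.1, hx⟩ : Bad x) hbx
      · exact hy

lemma pIdx_zJ (hxy : cubeLe x y) (hg : goodL x y l0) : pIdx (zJ x y l0) = pIdx y := by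
  have hl0y := l0_lt_pIdx_y hxy hg
  apply pIdx_eq
  · intro j hj
    rcases lt_trichotomy j l0 with h | h | h
    · rw [zJ_lt h]; exact hg.2.2.1 j h
    · rw [h, zJ_self]; simp
    · rw [zJ_gt h]; exact pIdx_ne y j hj
  · intro h
    have hlt : l0 < (⟨pIdx y, h⟩ : Fin n) := by rw [Fin.lt_def]; simpa using hl0y
    rw [zJ_gt hlt]
    exact pIdx_zero y h

lemma csSet_zJ_eq (hxy : cubeLe x y) (hbx : ¬ Bad x) (hg : goodL x y l0) :
    csSet (zJ x y l0) = csSet x ∪ csSet y := by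
  rw [csSet_def, csSet_def, csSet_def, pIdx_zJ hxy hg, mids_zJ hxy hbx hg, pIdx_x_eq hg,
    Finset.image_insert, Finset.image_union]
  ext a
  simp only [Finset.mem_insert, Finset.mem_union]
  tauto

lemma not_bad_zJ (hxy : cubeLe x y) (hby : ¬ Bad y) (hg : goodL x y l0) :
    ¬ Bad (zJ x y l0) := by
  rintro ⟨i, j, hij, h0, hmid⟩
  rcases lt_trichotomy i l0 with h | h | h
  · rw [zJ_lt h] at h0
    exact hg.2.2.1 i h h0
  · rw [h, zJ_self] at h0
    exact absurd h0 (by simp)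
  · rw [zJ_gt h] at h0
    have hj : l0 < j := lt_trans h hij
    rw [zJ_gt hj] at hmid
    exact hby ⟨i, j, hij, h0, hmid⟩

lemma goodL_unique {l l' : Fin n} (hg : goodL x y l) (hg' : goodL x y l') : l = l' := by
  rcases lt_trichotomy l l' with h | h | h
  · exact absurd hg.1 (hg'.2.2.1 l h)
  · exact h
  · exact absurd hg'.1 (hg.2.2.1 l' h)

end Good

lemma exists_goodL {x y : CubeB n} (hxy : cubeLe x y) (hbx : ¬ Bad x) (hby : ¬ Bad y)
    (hdisj : csSet x ∩ csSet y = ∅) : ∃ l, goodL x y l := by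
  have hnb : ∀ a : Fin (n + 1), a ∈ csSet x → a ∈ csSet y → False := by
    intro a h1 h2
    rw [Finset.eq_empty_iff_forall_notMem] at hdisj
    exact hdisj a (Finset.mem_inter.2 ⟨h1, h2⟩)
  have hpx : (pIdx x : ℕ) < n := by
    by_contra h
    push_neg at h
    have hxn : (pIdx x : ℕ) = n := le_antisymm (by have := (pIdx x).isLt; omega) h
    have hyn : pIdx y = pIdx x := by
      apply pIdx_eq
      · intro j hj hyj
        have hxj := cubeLe_zero hxy hyj
        have := pIdx_le x j hxj
        omega
      · intro hh
        omega
    exact hnb (pIdx x) (pIdx_mem_csSet x) (hyn ▸ pIdx_mem_csSet y)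
  set l0 : Fin n := ⟨pIdx x, hpx⟩ with hl0
  have hx0 : x l0 = CubeF.zero := pIdx_zero x hpx
  have h3 : ∀ j, j < l0 → x j ≠ CubeF.zero := by
    intro j hj
    exact pIdx_ne x j (by rw [Fin.lt_def] at hj; exact hj)
  have hcast : Fin.castSucc l0 = pIdx x := Fin.ext (by simp [hl0])
  have hy1 : y l0 = CubeF.one := by
    cases hyl : y l0 with
    | zero =>
      exfalso
      have hyp : pIdx y = pIdx x := by
        apply pIdx_eq
        · intro j hj hyj
          have hxj := cubeLe_zero hxy hyj
          exact pIdx_ne x j hj hxj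
        · intro hh
          have : (⟨(pIdx x : ℕ), hh⟩ : Fin n) = l0 := Fin.ext (by simp [hl0])
          rw [this]
          exact hyl
      exact hnb (pIdx x) (pIdx_mem_csSet x) (hyp ▸ pIdx_mem_csSet y)
    | mid =>
      exfalso
      have h2 : pIdx x ∈ csSet y := mem_csSet.2 (Or.inr ⟨l0, hyl, hcast⟩)
      exact hnb (pIdx x) (pIdx_mem_csSet x) h2
    | one => rfl
  have h4 : ∀ j : Fin n, y j = CubeF.mid → l0 < j := by
    intro j hyj
    cases hxj : x j with
    | zero =>
      have hle := pIdx_le x j hxj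
      have hne : j ≠ l0 := by
        intro he
        rw [he, hy1] at hyj
        exact absurd hyj (by simp)
      rw [Fin.lt_def]
      have : (j : ℕ) ≠ (l0 : ℕ) := fun he => hne (Fin.ext he)
      simp only [hl0] at *
      omega
    | mid =>
      exfalso
      exact hnb (Fin.castSucc j) (mem_csSet.2 (Or.inr ⟨j, hxj, rfl⟩))
        (mem_csSet.2 (Or.inr ⟨j, hyj, rfl⟩))
    | one =>
      exfalso
      rw [cubeLe_one hxy hxj] at hyj
      exact absurd hyj (by simp)
  exact ⟨l0, hx0, hy1, h3, h4⟩

lemma csL_single (z : CubeB n) : csL n (Finsupp.single z 1) = csFun n z := by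
  rw [csL, Finsupp.lift_apply, Finsupp.sum_single_index] <;> simp

lemma simpJoinC_zero_left (b : SimpChain n) : simpJoinC n 0 b = 0 := by
  simp [simpJoinC]

lemma simpJoinC_zero_right (a : SimpChain n) : simpJoinC n a 0 = 0 := by
  simp [simpJoinC]

lemma simpJoinC_single_single (s t : SimpB n) :
    simpJoinC n (Finsupp.single s 1) (Finsupp.single t 1) = simpJoinFun n s t := by
  rw [simpJoinC, Finsupp.sum_single_index, Finsupp.sum_single_index] <;> simp

theorem csL_cubeJoinFun (x y : CubeB n) (hxy : cubeLe x y) :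
    csL n (cubeJoinFun n x y) = simpJoinC n (csFun n x) (csFun n y) := by
  have hL : csL n (cubeJoinFun n x y) = ((-1 : ℤ) ^ cubeDeg x) •
      ∑ l : Fin n,
        ((if (∀ j, j < l → y j ≠ CubeF.mid) ∧ (∀ j, l < j → x j ≠ CubeF.mid) then (1 : ℤ)
            else 0) * joinF (x l) (y l)) • csFun n (zJ x y l) := by
    rw [cubeJoinFun_eq, map_smul, map_sum]
    congr 1
    refine Finset.sum_congr rfl fun l _ => ?_
    rw [map_smul, csL_single]
  rw [hL]
  by_cases hbx : Bad x
  · rw [Finset.sum_eq_zero (fun l _ => term_vanish hxy l (Or.inl hbx)), smul_zero,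
      csFun_def x, if_pos hbx, simpJoinC_zero_left]
  by_cases hby : Bad y
  · rw [Finset.sum_eq_zero (fun l _ => term_vanish hxy l (Or.inr (Or.inl hby))), smul_zero,
      csFun_def y, if_pos hby, simpJoinC_zero_right]
  rw [csFun_def x, if_neg hbx, csFun_def y, if_neg hby, simpJoinC_single_single]
  by_cases hex : ∃ l, goodL x y l
  · obtain ⟨l0, hg⟩ := hex
    rw [Finset.sum_eq_single l0
      (fun l _ hne => term_vanish hxy l (Or.inr (Or.inr
        (fun hgl => hne (goodL_unique hgl hg)))))
      (fun h => absurd (Finset.mem_univ l0) h)]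
    have hcond : (∀ j, j < l0 → y j ≠ CubeF.mid) ∧ (∀ j, l0 < j → x j ≠ CubeF.mid) := by
      constructor
      · intro j hj hymid
        have h2 := hg.2.2.2 j hymid
        exact absurd h2 (by omega)
      · intro j hj hxmid
        exact hbx ⟨l0, j, hj, hg.1, hxmid⟩
    rw [if_pos hcond, hg.1, hg.2.1]
    rw [csFun_def, if_neg (not_bad_zJ hxy hby hg), csSet_zJ_eq hxy hbx hg]
    unfold simpJoinFun
    rw [if_pos ⟨csSet_disj hxy hbx hg, ⟨pIdx x, pIdx_mem_csSet x⟩, ⟨pIdx y, pIdx_mem_csSet y⟩⟩,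
      card_csSet hbx, inversions_zero hxy hbx hg]
    norm_num [joinF]
  · rw [Finset.sum_eq_zero
      (fun l _ => term_vanish hxy l (Or.inr (Or.inr (fun hg => hex ⟨l, hg⟩)))), smul_zero]
    unfold simpJoinFun
    rw [if_neg (fun h => hex (exists_goodL hxy hbx hby h.1))]

lemma cubeJoinC_single_right (a : CubeChain n) (y : CubeB n) :
    cubeJoinC n a (Finsupp.single y 1) = a.sum fun x r => r • cubeJoinFun n x y := by
  unfold cubeJoinC
  refine Finsupp.sum_congr fun x _ => ?_
  rw [Finsupp.sum_single_index (by simp), mul_one]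

lemma simpJoinC_eq_lift (b : SimpChain n) (a : SimpChain n) :
    simpJoinC n a b = Finsupp.lift (SimpChain n) ℤ (SimpB n)
      (fun s => b.sum fun t u => u • simpJoinFun n s t) a := by
  rw [Finsupp.lift_apply]
  unfold simpJoinC
  refine Finsupp.sum_congr fun s _ => ?_
  rw [Finsupp.smul_sum]
  refine Finsupp.sum_congr fun t _ => ?_
  rw [smul_smul]

lemma csL_join_step (a : CubeChain n) (y : CubeB n)
    (h : ∀ z ∈ a.support, cubeLe z y) :
    csL n (cubeJoinC n a (Finsupp.single y 1)) = simpJoinC n (csL n a) (csFun n y) := by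
  have hca : csL n a = a.sum fun x r => r • csFun n x := by
    rw [csL, Finsupp.lift_apply]
  have hrhs : simpJoinC n (csL n a) (csFun n y)
      = a.sum fun x r => r • simpJoinC n (csFun n x) (csFun n y) := by
    rw [simpJoinC_eq_lift, hca, map_finsuppSum]
    refine Finsupp.sum_congr fun x _ => ?_
    rw [map_smul, ← simpJoinC_eq_lift]
  rw [hrhs, cubeJoinC_single_right, map_finsuppSum]
  refine Finsupp.sum_congr fun x hx => ?_
  rw [map_smul, csL_cubeJoinFun x y (h x hx)]

lemma support_cubeJoinFun {x y z : CubeB n}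
    (hz : z ∈ (cubeJoinFun n x y).support) :
    ∃ l, z = zJ x y l ∧ joinF (x l) (y l) ≠ 0 := by
  rw [Finsupp.mem_support_iff, cubeJoinFun_eq, Finsupp.smul_apply] at hz
  have hS := right_ne_zero_of_smul hz
  rw [Finsupp.finset_sum_apply] at hS
  obtain ⟨l, _, hl⟩ := Finset.exists_ne_zero_of_sum_ne_zero hS
  rw [Finsupp.smul_apply, Finsupp.single_apply, smul_eq_mul] at hl
  by_cases he : zJ x y l = z
  · refine ⟨l, he.symm, fun hj => ?_⟩
    rw [hj, mul_zero, zero_mul] at hl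
    exact hl rfl
  · rw [if_neg he, mul_zero] at hl
    exact absurd rfl hl

lemma cubeLe_refl (x : CubeB n) : cubeLe x x := fun _ => le_refl _

lemma cubeLe_trans {x y z : CubeB n} (h1 : cubeLe x y) (h2 : cubeLe y z) : cubeLe x z :=
  fun i => le_trans (h1 i) (h2 i)

lemma supp_step (a : CubeChain n) (y w : CubeB n) (h : ∀ z ∈ a.support, cubeLe z y)
    (hw : cubeLe y w) :
    ∀ z ∈ (cubeJoinC n a (Finsupp.single y 1)).support, cubeLe z w := by
  intro z hz
  rw [cubeJoinC_single_right] at hz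
  have hz' : z ∈ (∑ x ∈ a.support, a x • cubeJoinFun n x y).support := hz
  obtain ⟨x, hxs, hzx⟩ := Finset.mem_biUnion.1 (Finsupp.support_finset_sum hz')
  have hzx' := Finsupp.support_smul hzx
  obtain ⟨l, rfl, hjoin⟩ := support_cubeJoinFun hzx'
  have hxy := h x hxs
  obtain ⟨hx0, hy1⟩ := joinF_ne hxy hjoin
  intro j
  rcases lt_trichotomy j l with hjl | hjl | hjl
  · rw [zJ_lt hjl]
    exact le_trans (hxy j) (hw j)
  · rw [hjl, zJ_self]
    rw [cubeLe_one hw hy1]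
    simp [cellVal]
  · rw [zJ_gt hjl]
    exact hw j

lemma foldJoin_concat {C : Type*} (join : C → C → C) (z : C) (l : List C) (hl : l ≠ [])
    (a : C) : foldJoin join z (l.concat a) = join (foldJoin join z l) a := by
  cases l with
  | nil => exact absurd rfl hl
  | cons b t =>
    rw [List.concat_cons]
    show (t.concat a).foldl join b = join (t.foldl join b) a
    rw [List.concat_eq_append, List.foldl_concat]

lemma iterCubeJoin_succ (k : ℕ) (f : Fin (k + 2) → CubeB n) :
    iterCubeJoin n (k + 1) f = cubeJoinC n (iterCubeJoin n k (fun i => f i.castSucc))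
      (Finsupp.single (f (Fin.last (k + 1))) 1) := by
  unfold iterCubeJoin
  rw [List.ofFn_succ' (f := fun i : Fin (k + 2) => (Finsupp.single (f i) 1 : CubeChain n)),
    foldJoin_concat _ _ _ (by intro h; simpa using congrArg List.length h)]

lemma iterSimpJoin_succ (k : ℕ) (g : Fin (k + 2) → SimpChain n) :
    iterSimpJoin n (k + 1) g = simpJoinC n (iterSimpJoin n k (fun i => g i.castSucc))
      (g (Fin.last (k + 1))) := by
  unfold iterSimpJoin
  rw [List.ofFn_succ' (f := g),
    foldJoin_concat _ _ _ (by intro h; simpa using congrArg List.length h)]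

lemma iterCubeJoin_zero (f : Fin 1 → CubeB n) :
    iterCubeJoin n 0 f = Finsupp.single (f 0) 1 := by
  simp [iterCubeJoin, foldJoin, List.ofFn_succ]

lemma iterSimpJoin_zero (g : Fin 1 → SimpChain n) : iterSimpJoin n 0 g = g 0 := by
  simp [iterSimpJoin, foldJoin, List.ofFn_succ]

lemma iterCubeJoin_support (k : ℕ) (f : Fin (k + 1) → CubeB n)
    (hf : ∀ i j : Fin (k + 1), i ≤ j → cubeLe (f i) (f j)) :
    ∀ z ∈ (iterCubeJoin n k f).support, cubeLe z (f (Fin.last k)) := by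
  induction k with
  | zero =>
    intro z hz
    rw [iterCubeJoin_zero, Finsupp.support_single_ne_zero _ one_ne_zero] at hz
    have : z = f 0 := by simpa using hz
    rw [this]
    exact cubeLe_refl _
  | succ k ih =>
    intro z hz
    rw [iterCubeJoin_succ] at hz
    refine supp_step _ (f (Fin.last (k + 1))) _ ?_ (cubeLe_refl _) z hz
    intro z' hz'
    have h1 := ih (fun i => f i.castSucc)
      (fun i j hij => hf _ _ (Fin.castSucc_le_castSucc_iff.2 hij)) z' hz'
    exact cubeLe_trans h1 (hf (Fin.castSucc (Fin.last k)) (Fin.last (k + 1))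
      (by simp [Fin.le_def]))

theorem csL_iterCubeJoin (k : ℕ) (f : Fin (k + 1) → CubeB n)
    (hf : ∀ i j : Fin (k + 1), i ≤ j → cubeLe (f i) (f j)) :
    csL n (iterCubeJoin n k f) = iterSimpJoin n k (fun i => csFun n (f i)) := by
  induction k with
  | zero =>
    rw [iterCubeJoin_zero, csL_single, iterSimpJoin_zero]
  | succ k ih =>
    have hmono : ∀ i j : Fin (k + 1), i ≤ j → cubeLe (f i.castSucc) (f j.castSucc) :=
      fun i j hij => hf _ _ (Fin.castSucc_le_castSucc_iff.2 hij)
    have hsup : ∀ z ∈ (iterCubeJoin n k (fun i => f i.castSucc)).support,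
        cubeLe z (f (Fin.last (k + 1))) := by
      intro z hz
      exact cubeLe_trans (iterCubeJoin_support k _ hmono z hz)
        (hf (Fin.castSucc (Fin.last k)) (Fin.last (k + 1)) (by simp [Fin.le_def]))
    rw [iterCubeJoin_succ, csL_join_step _ _ hsup, ih (fun i => f i.castSucc) hmono,
      iterSimpJoin_succ]

end CartanSerre

open CartanSerre in
/-- For basis elements `x⁽¹⁾ ≤ ⋯ ≤ x⁽ᵏ⁺¹⁾` of `C(□^n)`,
`CS(∗^k(x⁽¹⁾ ⊗ ⋯ ⊗ x⁽ᵏ⁺¹⁾)) = ∗^k(CS(x⁽¹⁾) ⊗ ⋯ ⊗ CS(x⁽ᵏ⁺¹⁾))`, where `∗^k` is the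
left-parenthesized iterated join (cubical on the left, simplicial on the right). -/
theorem cartanSerre_iterJoin_of_monotone (n k : ℕ) (f : Fin (k + 1) → CubeB n)
    (hf : ∀ i j : Fin (k + 1), i ≤ j → cubeLe (f i) (f j)) :
    csL n (iterCubeJoin n k f) = iterSimpJoin n k (fun i => csFun n (f i)) :=
  csL_iterCubeJoin k f hf
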